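/- With $f$ defined as above with parameters $k \geq 1$, where $\alpha_1 = -e_1$ and $\alpha_0 = 1$: if $a_1, \ldots, a_p$ are nonnegative integers with $\sum_i a_i = k$ and $a_i \leq k$, then $f(a_1, \ldots, a_p) = 0$ in $R$. -/

import Mathlib

open Finset

/-- Binomial coefficient with integer arguments and the convention
`C(a,b) = 0` if `b < 0` or `a < b`. -/
def zchoose (a b : ℤ) : ℤ :=
  if b < 0 ∨ a < b then 0 else (a.toNat.choose b.toNat : ℤ)

/-- The class `f(a₁,…,a_p) = ∑_{d ∈ ℕᵖ} (∏ᵢ C(k-dᵢ, k-aᵢ) e_{dᵢ}) α_{|a|-|d|-(k-1)}`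
from Section 3. The sum is finite: terms with some `dᵢ > k` vanish since `e_{dᵢ} = 0`,
so it suffices to sum over `dᵢ ≤ k`. -/
def fclass {R : Type*} [CommRing R] (k p : ℕ) (e : ℕ → R) (α : ℤ → R)
    (a : Fin p → ℕ) : R :=
  ∑ d ∈ Fintype.piFinset (fun _ : Fin p => Finset.range (k + 1)),
    (∏ i, (zchoose ((k : ℤ) - d i) ((k : ℤ) - a i) : R) * e (d i)) *
      α ((∑ i, (a i : ℤ)) - (∑ i, (d i : ℤ)) - ((k : ℤ) - 1))


lemma zchoose_mul (k a : ℕ) (hk : 1 ≤ k) (ha : a ≤ k) :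
    (k : ℤ) * zchoose ((k:ℤ) - 1) ((k:ℤ) - a) = (a : ℤ) * zchoose (k:ℤ) ((k:ℤ) - a) := by
  rcases Nat.eq_zero_or_pos a with h0 | hpos
  · subst h0
    have : zchoose ((k:ℤ) - 1) ((k:ℤ) - (0:ℕ)) = 0 := by
      unfold zchoose; rw [if_pos]; · push_cast; right; omega
    rw [this]; push_cast; ring
  · have h1 : (k:ℤ) - 1 = ((k-1 : ℕ) : ℤ) := by push_cast [hk]; ring
    have h2 : (k:ℤ) - (a:ℤ) = ((k-a : ℕ) : ℤ) := by push_cast [ha]; ring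
    unfold zchoose
    rw [if_neg (by omega), if_neg (by omega), h1, h2, Int.toNat_natCast, Int.toNat_natCast,
      Int.toNat_natCast]
    have hs1 : (k-1).choose (k-a) = (k-1).choose (a-1) := by
      have : k - a = (k-1) - (a-1) := by omega
      rw [this, Nat.choose_symm (by omega)]
    have hs2 : k.choose (k-a) = k.choose a := Nat.choose_symm ha
    rw [hs1, hs2]
    have := Nat.add_one_mul_choose_eq (k-1) (a-1)
    have hk' : k - 1 + 1 = k := by omega
    have ha' : a - 1 + 1 = a := by omega
    rw [hk', ha'] at this
    exact_mod_cast by rw [this]; ring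

lemma key_identity (k p : ℕ) (hk : 1 ≤ k) (a : Fin p → ℕ) (ha : ∀ i, a i ≤ k)
    (hsum : ∑ i, a i = k) :
    ∑ s : Fin p, zchoose ((k:ℤ) - 1) ((k:ℤ) - a s) *
        ∏ i ∈ univ.erase s, zchoose (k:ℤ) ((k:ℤ) - a i) =
      ∏ i, zchoose (k:ℤ) ((k:ℤ) - a i) := by
  have hk0 : (k:ℤ) ≠ 0 := by exact_mod_cast (by omega : k ≠ 0)
  apply mul_left_cancel₀ hk0
  rw [Finset.mul_sum]
  have : ∀ s : Fin p, (k:ℤ) * (zchoose ((k:ℤ) - 1) ((k:ℤ) - a s) *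
      ∏ i ∈ univ.erase s, zchoose (k:ℤ) ((k:ℤ) - a i)) =
      (a s : ℤ) * ∏ i, zchoose (k:ℤ) ((k:ℤ) - a i) := by
    intro s
    rw [← mul_assoc, zchoose_mul k (a s) hk (ha s), mul_assoc,
      Finset.mul_prod_erase univ (fun i => zchoose (k:ℤ) ((k:ℤ) - a i)) (mem_univ s)]
  rw [Finset.sum_congr rfl (fun s _ => this s), ← Finset.sum_mul]
  congr 1
  exact_mod_cast congrArg (Nat.cast : ℕ → ℤ) hsum

/-- Lemma 3.2(2): if `|a| = k` and `aᵢ ≤ k`, then `f(a) = 0`. -/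
theorem fclass_weight_k {R : Type*} [CommRing R] (k p : ℕ) (hk : 1 ≤ k)
    (e : ℕ → R) (α : ℤ → R) (he0 : e 0 = 1) (hek : ∀ i, k < i → e i = 0)
    (hα0 : α 0 = 1) (hα1 : α 1 = -e 1) (hαneg : ∀ j : ℤ, j < 0 → α j = 0)
    (a : Fin p → ℕ) (ha : ∀ i, a i ≤ k) (hsum : ∑ i, a i = k) :
    fclass k p e α a = 0 := by
  classical
  set S := Fintype.piFinset (fun _ : Fin p => Finset.range (k + 1)) with hS
  set F : (Fin p → ℕ) → R := fun d =>
    (∏ i, (zchoose ((k : ℤ) - d i) ((k : ℤ) - a i) : R) * e (d i)) *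
      α (1 - (∑ i, d i : ℕ)) with hF
  have hsa : (∑ i, (a i : ℤ)) = (k:ℤ) := by push_cast [← hsum]; rfl
  have hstep0 : fclass k p e α a = ∑ d ∈ S, F d := by
    apply Finset.sum_congr rfl
    intro d _
    congr 1
    congr 1
    push_cast
    rw [hsa]; ring
  -- restrict to |d| ≤ 1
  have h1 : ∑ d ∈ S, F d = ∑ d ∈ S.filter (fun d => ∑ i, d i ≤ 1), F d := by
    refine (Finset.sum_filter_of_ne ?_).symm
    intro d _ hne
    by_contra hgt
    apply hne
    have hneg : ((1:ℤ) - (∑ i, d i : ℕ)) < 0 := by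
      have : 2 ≤ ∑ i, d i := by omega
      have : (2:ℤ) ≤ ((∑ i, d i : ℕ) : ℤ) := by exact_mod_cast this
      omega
    rw [hF]; simp only
    rw [hαneg _ hneg, mul_zero]
  -- describe the filtered set
  have hset : S.filter (fun d => ∑ i, d i ≤ 1) =
      insert (fun _ => 0) ((univ : Finset (Fin p)).image fun s => Pi.single s 1) := by
    ext d
    simp only [mem_filter, hS, Fintype.mem_piFinset, mem_range, mem_insert, mem_image,
      mem_univ, true_and]
    constructor
    · rintro ⟨hd, hle⟩
      rcases Nat.le_one_iff_eq_zero_or_eq_one.mp hle with h | h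
      · left
        funext i
        exact Finset.sum_eq_zero_iff.mp h i (mem_univ i)
      · right
        obtain ⟨s, _, hs⟩ := Finset.exists_ne_zero_of_sum_ne_zero (by rw [h]; exact one_ne_zero)
        have hsplit : d s + ∑ i ∈ univ.erase s, d i = 1 := by
          rw [Finset.add_sum_erase univ d (mem_univ s), h]
        have hds : d s = 1 := by omega
        have hrest : ∑ i ∈ univ.erase s, d i = 0 := by omega
        refine ⟨s, funext fun i => ?_⟩
        by_cases hi : i = s
        · subst hi; rw [Pi.single_eq_same, hds]
        · rw [Pi.single_eq_of_ne hi]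
          exact (Finset.sum_eq_zero_iff.mp hrest i (mem_erase.mpr ⟨hi, mem_univ i⟩)).symm
    · rintro (rfl | ⟨s, rfl⟩)
      · exact ⟨fun i => Nat.succ_pos k, by simp⟩
      · constructor
        · intro i
          by_cases hi : i = s
          · subst hi; rw [Pi.single_eq_same]; omega
          · rw [Pi.single_eq_of_ne hi]; omega
        · rw [Finset.sum_pi_single']
          simp
  have h0notin : (fun _ : Fin p => 0) ∉ (univ : Finset (Fin p)).image fun s => Pi.single s 1 := by
    simp only [mem_image, mem_univ, true_and, not_exists]
    intro s hs
    have := congrFun hs s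
    rw [Pi.single_eq_same] at this
    exact one_ne_zero this
  have hinj : ∀ x ∈ (univ : Finset (Fin p)), ∀ y ∈ univ,
      (Pi.single x 1 : Fin p → ℕ) = Pi.single y 1 → x = y := by
    intro x _ y _ hxy
    by_contra hne
    have := congrFun hxy x
    rw [Pi.single_eq_same, Pi.single_eq_of_ne hne] at this
    exact one_ne_zero this
  rw [hstep0, h1, hset, Finset.sum_insert h0notin, Finset.sum_image hinj]
  -- compute F 0
  have hF0 : F (fun _ => 0) = (∏ i, (zchoose (k:ℤ) ((k:ℤ) - a i) : R)) * (-(e 1)) := by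
    rw [hF]
    simp [he0, hα1]
  -- compute F (Pi.single s 1)
  have hFs : ∀ s : Fin p, F (Pi.single s 1) =
      ((zchoose ((k:ℤ) - 1) ((k:ℤ) - a s) : R) *
        ∏ i ∈ univ.erase s, (zchoose (k:ℤ) ((k:ℤ) - a i) : R)) * e 1 := by
    intro s
    rw [hF]
    simp only
    have hsum1 : ∑ i, (Pi.single s 1 : Fin p → ℕ) i = 1 := by
      rw [Finset.sum_pi_single']; simp
    rw [hsum1]
    norm_num [hα0]
    rw [← Finset.mul_prod_erase univ
      (fun i => (zchoose ((k:ℤ) - ((Pi.single s 1 : Fin p → ℕ) i : ℤ)) ((k:ℤ) - a i) : R) *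
        e ((Pi.single s 1 : Fin p → ℕ) i))
      (mem_univ s),
      Finset.prod_congr rfl (g := fun i => (zchoose (k:ℤ) ((k:ℤ) - a i) : R))
        (fun i hi => by simp [Pi.single_eq_of_ne (mem_erase.mp hi).1, he0])]
    simp only [Pi.single_eq_same]
    push_cast
    ring
  rw [hF0, Finset.sum_congr rfl (fun s _ => hFs s), ← Finset.sum_mul]
  have hkeyR : (∑ s : Fin p, (zchoose ((k:ℤ) - 1) ((k:ℤ) - a s) : R) *
      ∏ i ∈ univ.erase s, (zchoose (k:ℤ) ((k:ℤ) - a i) : R)) =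
      ∏ i, (zchoose (k:ℤ) ((k:ℤ) - a i) : R) := by
    have := congrArg (fun z : ℤ => (z : R)) (key_identity k p hk a ha hsum)
    push_cast at this
    exact this
  rw [hkeyR]
  ring
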